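/- Fix p ∈ (1,∞) with conjugate exponent q. Let X be a Banach space, m, N ∈ ℕ, and λ₁,…,λ_m ∈ [0,1] with Σλ_k = 1. Let A be the set of functions α : {1,…,N} → {1,…,m} and for α ∈ A set |λ|_α := Π_{k=1}^N λ_{α(k)}. Then Σ_{α∈A} |λ|_α = 1, the map J : X → (X^N)^A defined by (Jx)_{k,α} = (|λ|_α/N)^{1/p} x is an isometry from X into ℓ^p_{N·m^N}(X), and the map Q : (X^N)^A → X defined by Q(x_{k,α}) = Σ_{α∈A} (|λ|_α/N)^{1/q} Σ_{k=1}^N x_{k,α} is a contraction from ℓ^p_{N·m^N}(X) to X. -/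

import Mathlib

open scoped ENNReal

/-- For `p ∈ (1,∞)` with conjugate `q`, convex coefficients
`λ₁, …, λ_m` and `A` the set of maps `{1,…,N} → {1,…,m}` with `|λ|_α = ∏ₖ λ_{α(k)}`:
`∑_α |λ|_α = 1`, the map `J x = ((|λ|_α/N)^{1/p} x)_{k,α}` is an isometry from `X` into
`ℓ^p_{N·m^N}(X)`, and `Q((x_{k,α})) = ∑_α (|λ|_α/N)^{1/q} ∑ₖ x_{k,α}` is a contraction. -/
theorem convex_coefficients_J_isometry_Q_contraction
    (p q : ℝ) (hp : 1 < p) (hpq : 1 / p + 1 / q = 1)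
    (𝕜 : Type*) [RCLike 𝕜] (X : Type*) [NormedAddCommGroup X] [NormedSpace 𝕜 X]
    (m N : ℕ) (hm : 0 < m) (hN : 0 < N)
    (lam : Fin m → ℝ) (hlam : ∀ k, lam k ∈ Set.Icc (0 : ℝ) 1) (hsum : ∑ k, lam k = 1) :
    (∑ α : Fin N → Fin m, ∏ k, lam (α k)) = 1 ∧
    (∀ x : X,
      ‖(WithLp.equiv (ENNReal.ofReal p) (∀ _ : (Fin N → Fin m) × Fin N, X)).symm
          (fun i => ((((∏ k, lam (i.1 k)) / N) ^ (1 / p) : ℝ) : 𝕜) • x)‖ = ‖x‖) ∧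
    (∀ y : PiLp (ENNReal.ofReal p) (fun _ : (Fin N → Fin m) × Fin N => X),
      ‖∑ α : Fin N → Fin m, ((((∏ k, lam (α k)) / N) ^ (1 / q) : ℝ) : 𝕜) •
          ∑ k : Fin N, (WithLp.equiv (ENNReal.ofReal p) _ y) (α, k)‖ ≤ ‖y‖) := by
  have hp0 : (0:ℝ) < p := lt_trans one_pos hp
  have hN0 : (0:ℝ) < N := Nat.cast_pos.mpr hN
  have hcpq : p.HolderConjugate q := Real.holderConjugate_iff.mpr ⟨hp, by rw [inv_eq_one_div, inv_eq_one_div]; exact hpq⟩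
  have hq0 : (0:ℝ) < q := hcpq.symm.pos
  -- nonnegativity of coefficients
  have hc0 : ∀ α : Fin N → Fin m, 0 ≤ (∏ k, lam (α k)) / N := fun α =>
    div_nonneg (Finset.prod_nonneg fun k _ => (hlam (α k)).1) hN0.le
  -- part 1
  have h1 : (∑ α : Fin N → Fin m, ∏ k, lam (α k)) = 1 := by
    rw [← Fintype.prod_sum (fun _ : Fin N => lam)]
    simp [hsum]
  -- sum of coefficients over the product index is 1
  have hcsum : (∑ i : (Fin N → Fin m) × Fin N, (∏ k, lam (i.1 k)) / N) = 1 := by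
    rw [Fintype.sum_prod_type]
    simp only [Finset.sum_const, Finset.card_univ, Fintype.card_fin, nsmul_eq_mul]
    have e : ∀ α : Fin N → Fin m, (N:ℝ) * ((∏ k, lam (α k)) / N) = ∏ k, lam (α k) := by
      intro α; field_simp
    rw [Finset.sum_congr rfl fun α _ => e α]; exact h1
  have hptoReal : (ENNReal.ofReal p).toReal = p := ENNReal.toReal_ofReal hp0.le
  have hptop : 0 < (ENNReal.ofReal p).toReal := by rw [hptoReal]; exact hp0
  refine ⟨h1, ?_, ?_⟩
  · intro x
    rw [PiLp.norm_eq_sum hptop]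
    simp only [WithLp.equiv_symm_apply, PiLp.toLp_apply, hptoReal, norm_smul, RCLike.norm_ofReal]
    have : ∀ i : (Fin N → Fin m) × Fin N,
        (|((∏ k, lam (i.1 k)) / N) ^ (1/p)| * ‖x‖) ^ p = ((∏ k, lam (i.1 k)) / N) * ‖x‖ ^ p := by
      intro i
      rw [abs_of_nonneg (Real.rpow_nonneg (hc0 i.1) _),
        Real.mul_rpow (Real.rpow_nonneg (hc0 i.1) _) (norm_nonneg x),
        ← Real.rpow_mul (hc0 i.1), one_div_mul_cancel hp0.ne', Real.rpow_one]
    rw [Finset.sum_congr rfl fun i _ => this i, ← Finset.sum_mul, hcsum, one_mul,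
      ← Real.rpow_mul (norm_nonneg x), mul_one_div_cancel hp0.ne', Real.rpow_one]
  · intro y
    calc ‖∑ α : Fin N → Fin m, ((((∏ k, lam (α k)) / N) ^ (1 / q) : ℝ) : 𝕜) •
          ∑ k : Fin N, (WithLp.equiv (ENNReal.ofReal p) _ y) (α, k)‖
        ≤ ∑ α : Fin N → Fin m, ∑ k : Fin N,
            (((∏ k, lam (α k)) / N) ^ (1 / q)) * ‖y (α, k)‖ := by
          refine (norm_sum_le _ _).trans (Finset.sum_le_sum fun α _ => ?_)
          rw [norm_smul, RCLike.norm_ofReal, abs_of_nonneg (Real.rpow_nonneg (hc0 α) _),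
            ← Finset.mul_sum]
          exact mul_le_mul_of_nonneg_left (norm_sum_le _ _) (Real.rpow_nonneg (hc0 α) _)
      _ = ∑ i : (Fin N → Fin m) × Fin N,
            (((∏ k, lam (i.1 k)) / N) ^ (1 / q)) * ‖y i‖ := by
          rw [Fintype.sum_prod_type]
      _ ≤ (∑ i : (Fin N → Fin m) × Fin N, (((∏ k, lam (i.1 k)) / N) ^ (1 / q)) ^ q) ^ (1/q) *
            (∑ i : (Fin N → Fin m) × Fin N, ‖y i‖ ^ p) ^ (1/p) := by
          exact Real.inner_le_Lp_mul_Lq_of_nonneg _ hcpq.symm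
            (fun i _ => Real.rpow_nonneg (hc0 i.1) _) (fun i _ => norm_nonneg _)
      _ = ‖y‖ := by
          have e : ∀ i : (Fin N → Fin m) × Fin N,
              ((((∏ k, lam (i.1 k)) / N) ^ (1 / q)) : ℝ) ^ q = (∏ k, lam (i.1 k)) / N := by
            intro i
            rw [← Real.rpow_mul (hc0 i.1), one_div_mul_cancel hq0.ne', Real.rpow_one]
          rw [Finset.sum_congr rfl fun i _ => e i, hcsum, Real.one_rpow, one_mul,
            PiLp.norm_eq_sum hptop]
          simp [hptoReal]
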